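/- Let 𝔽 be a field, t ∈ V_1⊗⋯⊗V_k a k-tensor over 𝔽, and θ a probability distribution on [k]. Then limsup_{n→∞} SR(t^{⊗n})^{1/n} ≤ ζ^θ(t), where SR denotes slice rank and ζ^θ the upper support functional. -/

import Mathlib

open scoped BigOperators
open scoped Classical
open scoped ComplexOrder

noncomputable section

namespace CVZ

variable {k : ℕ}

/-- A concrete `k`-tensor over `F` with index types `I i`: the coefficient array
(in the standard bases) of a multilinear map `V₁ × ⋯ × V_k → F` with `dim V_i = |I i|`. -/
abbrev Tensor (F : Type*) (I : Fin k → Type*) : Type _ := (∀ i, I i) → F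

section Basic

variable {F : Type*} [Field F] {I J : Fin k → Type*}
  [∀ i, Fintype (I i)] [∀ i, DecidableEq (I i)]
  [∀ i, Fintype (J i)] [∀ i, DecidableEq (J i)]

/-- Coefficient array of the restriction `f ∘ (A₁, …, A_k)`, where `A_i : W_i → V_i`
is given by the matrix `A i`. -/
def restrictBy (A : ∀ i, Matrix (I i) (J i) F) (t : Tensor F I) : Tensor F J :=
  fun β => ∑ α : ∀ i, I i, (∏ i, A i (α i) (β i)) * t α

/-- `t` restricts to `s`. -/
def Restricts (t : Tensor F I) (s : Tensor F J) : Prop :=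
  ∃ A : ∀ i, Matrix (I i) (J i) F, restrictBy A t = s

/-- A choice of bases of the spaces `V_i`, encoded as a tuple of invertible matrices. -/
def IsBasisTuple (B : ∀ i, Matrix (I i) (I i) F) : Prop := ∀ i, IsUnit (B i)

/-- Support of a tensor (with respect to the standard bases). -/
def supp (t : Tensor F I) : Set (∀ i, I i) := {α | t α ≠ 0}

end Basic

section Entropy

/-- A probability distribution on the finite set `X`. -/
def IsProbDist {X : Type*} [Fintype X] (P : X → ℝ) : Prop :=
  (∀ x, 0 ≤ P x) ∧ ∑ x, P x = 1

/-- Base-2 Shannon entropy. -/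
def H2 {X : Type*} [Fintype X] (P : X → ℝ) : ℝ :=
  ∑ x, -(P x * Real.logb 2 (P x))

variable {I : Fin k → Type*} [∀ i, Fintype (I i)] [∀ i, DecidableEq (I i)]

/-- The `i`-th marginal of a distribution on a product set. -/
def marg (P : (∀ i, I i) → ℝ) (i : Fin k) : I i → ℝ :=
  fun a => ∑ α : ∀ i, I i, if α i = a then P α else 0

/-- `H_θ(P)`, the `θ`-weighted average of the marginal entropies. -/
def Hw (θ : Fin k → ℝ) (P : (∀ i, I i) → ℝ) : ℝ :=
  ∑ i, θ i * H2 (marg P i)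

/-- `H_θ(Φ)`, the supremum of `H_θ(P)` over distributions `P` supported on `Φ`. -/
def HwSet (θ : Fin k → ℝ) (Φ : Set (∀ i, I i)) : ℝ :=
  sSup {h | ∃ P : (∀ i, I i) → ℝ, IsProbDist P ∧ (∀ α, P α ≠ 0 → α ∈ Φ) ∧ h = Hw θ P}

/-- Maximal points of a subset of the product order. -/
def maxPoints [∀ i, LinearOrder (I i)] (Φ : Set (∀ i, I i)) : Set (∀ i, I i) :=
  {α | α ∈ Φ ∧ ∀ β ∈ Φ, ¬ α < β}

end Entropy

section SuppFunc

variable {F : Type*} [Field F] {I : Fin k → Type*} [∀ i, Fintype (I i)] [∀ i, DecidableEq (I i)]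

/-- The logarithmic Strassen upper support functional `ρ^θ`. -/
def rhoUpper (θ : Fin k → ℝ) (t : Tensor F I) : ℝ :=
  sInf {h | ∃ B : ∀ i, Matrix (I i) (I i) F, IsBasisTuple B ∧
    h = HwSet θ (supp (restrictBy B t))}

/-- The Strassen upper support functional `ζ^θ`. -/
def zetaUpper (θ : Fin k → ℝ) (t : Tensor F I) : ℝ :=
  if t = 0 then 0 else (2 : ℝ) ^ rhoUpper θ t

/-- The logarithmic Strassen lower support functional `ρ_θ`. -/
def rhoLower [∀ i, LinearOrder (I i)] (θ : Fin k → ℝ) (t : Tensor F I) : ℝ :=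
  sSup {h | ∃ B : ∀ i, Matrix (I i) (I i) F, IsBasisTuple B ∧
    h = HwSet θ (maxPoints (supp (restrictBy B t)))}

/-- The Strassen lower support functional `ζ_θ`. -/
def zetaLower [∀ i, LinearOrder (I i)] (θ : Fin k → ℝ) (t : Tensor F I) : ℝ :=
  if t = 0 then 0 else (2 : ℝ) ^ rhoLower θ t

/-- The instability of a tensor. -/
def instab (t : Tensor F I) : ℝ :=
  sSup {ε : ℝ | 0 ≤ ε ∧ ∃ B : ∀ i, Matrix (I i) (I i) F, IsBasisTuple B ∧
    ∃ w : ∀ i, I i → ℝ, (∀ i x, 0 ≤ w i x) ∧ (∀ i, ∃ x, w i x ≠ 0) ∧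
      ∀ a ∈ supp (restrictBy B t), ∑ i, w i (a i) ≤
        ∑ i, ((∑ x : I i, w i x) / (Fintype.card (I i) : ℝ) - ε * ⨆ x : I i, w i x)}

end SuppFunc

section Ops

variable {F : Type*} [Field F]

/-- The unit tensor `⟨r⟩`. -/
def unitTensor (F : Type*) [Field F] (k r : ℕ) : Tensor F (fun _ : Fin k => Fin r) :=
  fun α => if ∀ i j : Fin k, α i = α j then 1 else 0

variable {n m : Fin k → ℕ}

/-- Direct sum of two tensors, with the concatenated (naturally ordered) bases. -/
def dirSumFin (s : Tensor F fun i => Fin (n i)) (t : Tensor F fun i => Fin (m i)) :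
    Tensor F fun i => Fin (n i + m i) :=
  fun α =>
    (if h : ∀ i, (α i : ℕ) < n i then s (fun i => ⟨(α i : ℕ), h i⟩) else 0) +
    (if h : ∀ i, n i ≤ (α i : ℕ) then
      t (fun i => ⟨(α i : ℕ) - n i, by have h1 := (α i).isLt; have h2 := h i; omega⟩) else 0)

/-- Tensor (Kronecker) product of two tensors, with the product bases ordered naturally. -/
def tensMulFin (s : Tensor F fun i => Fin (n i)) (t : Tensor F fun i => Fin (m i)) :
    Tensor F fun i => Fin (n i * m i) :=
  fun α =>
    s (fun i => ⟨(α i : ℕ) / m i, by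
      have h := (α i).isLt
      exact Nat.div_lt_of_lt_mul (lt_of_lt_of_le h (Nat.mul_comm (n i) (m i)).le)⟩) *
    t (fun i => ⟨(α i : ℕ) % m i, by
      have h := (α i).isLt
      have hpos : 0 < n i * m i := Nat.lt_of_le_of_lt (Nat.zero_le _) h
      have hm : 0 < m i := by
        rcases Nat.eq_zero_or_pos (m i) with h0 | h0
        · simp [h0] at hpos
        · exact h0
      exact Nat.mod_lt _ hm⟩)

/-- The `N`-th tensor power of a tensor (grouping the legs into `k` groups). -/
def tpow {I : Fin k → Type*} (t : Tensor F I) (N : ℕ) : Tensor F fun i => Fin N → I i :=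
  fun α => ∏ j : Fin N, t fun i => α i j

end Ops

section Subrank

variable {F : Type*} [Field F] {I : Fin k → Type*} [∀ i, Fintype (I i)] [∀ i, DecidableEq (I i)]

/-- The subrank `Q(t)` of a tensor: the largest `r` with `⟨r⟩ ≤ t`. -/
def Qtensor (t : Tensor F I) : ℕ :=
  sSup {r : ℕ | Restricts t (unitTensor F k r)}

/-- A slice: a tensor of the form `v ⊗ w` with `v` in the `j`-th leg. -/
def IsSlice (s : Tensor F I) : Prop :=
  ∃ (j : Fin k) (v : I j → F) (w : (∀ i : {i : Fin k // i ≠ j}, I i.1) → F),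
    ∀ α, s α = v (α j) * w (fun i => α i.1)

/-- The slice rank of a tensor. -/
def sliceRank (t : Tensor F I) : ℕ :=
  sInf {r : ℕ | ∃ c : Fin r → Tensor F I, (∀ a, IsSlice (c a)) ∧ t = ∑ a, c a}

end Subrank

section Combinatorial

variable {I : Fin k → Type*}

/-- A diagonal: any two distinct elements differ in all coordinates. -/
def IsDiagonal (D : Set (∀ i, I i)) : Prop :=
  ∀ a ∈ D, ∀ b ∈ D, a ≠ b → ∀ i, a i ≠ b i

/-- The `i`-th projection of a set of tuples. -/
def projSet (D : Set (∀ i, I i)) (i : Fin k) : Set (I i) := {x | ∃ a ∈ D, a i = x}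

/-- A free diagonal in `Φ`: a diagonal `D` with `D = Φ ∩ (D₁ × ⋯ × D_k)`. -/
def IsFreeDiagonal (D Φ : Set (∀ i, I i)) : Prop :=
  IsDiagonal D ∧ D = Φ ∩ {a | ∀ i, a i ∈ projSet D i}

/-- The (combinatorial) subrank of a set: the maximal size of a free diagonal. -/
def Qset (Φ : Set (∀ i, I i)) : ℕ :=
  sSup {r : ℕ | ∃ D : Set (∀ i, I i), IsFreeDiagonal D Φ ∧ D.ncard = r}

/-- The `N`-fold coordinatewise power of a set of tuples. -/
def setPow (Φ : Set (∀ i, I i)) (N : ℕ) : Set (∀ i, Fin N → I i) :=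
  {α | ∀ j : Fin N, (fun i => α i j) ∈ Φ}

/-- A tight set. -/
def TightSet (Φ : Set (∀ i, I i)) : Prop :=
  ∃ u : ∀ i, I i → ℤ, (∀ i, Function.Injective (u i)) ∧ ∀ α ∈ Φ, ∑ i, u i (α i) = 0

/-- `Φ` is a combinatorial degeneration of `Ψ` (written `Ψ ⊵ Φ`). -/
def CombDegen (Ψ Φ : Set (∀ i, I i)) : Prop :=
  Φ ⊆ Ψ ∧ ∃ u : ∀ i, I i → ℤ,
    (∀ α ∈ Φ, ∑ i, u i (α i) = 0) ∧ ∀ α ∈ Ψ, α ∉ Φ → 0 < ∑ i, u i (α i)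

end Combinatorial

/-- A tight tensor: some basis tuple gives a tight support. -/
def TightTensor {F : Type*} [Field F] {I : Fin k → Type*} [∀ i, Fintype (I i)]
    [∀ i, DecidableEq (I i)] (t : Tensor F I) : Prop :=
  ∃ B : ∀ i, Matrix (I i) (I i) F, IsBasisTuple B ∧ TightSet (supp (restrictBy B t))

/-- A complete (decreasing) flag of subspaces, `W 0 = ⊤` and `dim (W j) = dim V − j`. -/
def IsCompleteFlag (F : Type*) [Field F] {V : Type*} [AddCommGroup V] [Module F V]
    (W : ℕ → Submodule F V) : Prop :=
  Antitone W ∧ W 0 = ⊤ ∧ ∀ j : ℕ, Module.finrank F (W j) = Module.finrank F V - j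

/-- Evaluation of (the multilinear map associated with) `t` at a tuple of vectors. -/
def eval {F : Type*} [Field F] {I : Fin k → Type*} [∀ i, Fintype (I i)] [∀ i, DecidableEq (I i)]
    (t : Tensor F I) (v : ∀ i, I i → F) : F :=
  ∑ α : ∀ i, I i, (∏ i, v i (α i)) * t α

/-- The support of `t` with respect to a tuple of complete flags. -/
def suppFlag {F : Type*} [Field F] {n : Fin k → ℕ} (t : Tensor F fun i => Fin (n i))
    (W : ∀ i, ℕ → Submodule F (Fin (n i) → F)) : Set (∀ i, Fin (n i)) :=
  {α | ∃ v : ∀ i, Fin (n i) → F, (∀ i, v i ∈ W i (α i : ℕ)) ∧ eval t v ≠ 0}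

section Quantum

variable {I : Fin k → Type*} [∀ i, Fintype (I i)] [∀ i, DecidableEq (I i)]

/-- Von Neumann entropy (base 2) of a Hermitian matrix. -/
def vnEntropy {d : Type*} [Fintype d] [DecidableEq d] (ρ : Matrix d d ℂ) : ℝ :=
  if h : ρ.IsHermitian then ∑ x, -(h.eigenvalues x * Real.logb 2 (h.eigenvalues x)) else 0

/-- The `j`-th marginal (reduced density matrix) of the pure state `|t⟩⟨t| / ⟨t|t⟩`. -/
def margMat (t : Tensor ℂ I) (j : Fin k) : Matrix (I j) (I j) ℂ :=
  fun a b =>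
    (∑ α : ∀ i, I i, ∑ β : ∀ i, I i,
      if α j = a ∧ β j = b ∧ (∀ i, i ≠ j → α i = β i) then t α * star (t β) else 0) /
    ∑ α : ∀ i, I i, t α * star (t α)

/-- The logarithmic lower quantum functional `E_θ` for `θ` a distribution on `[k]`. -/
def Ewq (θ : Fin k → ℝ) (t : Tensor ℂ I) : ℝ :=
  sSup {h | ∃ A : ∀ i, Matrix (I i) (I i) ℂ, IsBasisTuple A ∧
    h = ∑ j, θ j * vnEntropy (margMat (restrictBy A t) j)}

/-- The marginal (reduced density matrix) on the legs in `S` of the pure state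
`|t⟩⟨t| / ⟨t|t⟩`. -/
def margMatSet (t : Tensor ℂ I) (S : Finset (Fin k)) :
    Matrix (∀ i : {x : Fin k // x ∈ S}, I i.1) (∀ i : {x : Fin k // x ∈ S}, I i.1) ℂ :=
  fun a b =>
    (∑ α : ∀ i, I i, ∑ β : ∀ i, I i,
      if (∀ (i : Fin k) (hi : i ∈ S), α i = a ⟨i, hi⟩ ∧ β i = b ⟨i, hi⟩) ∧
         (∀ i, i ∉ S → α i = β i)
      then t α * star (t β) else 0) /
    ∑ α : ∀ i, I i, t α * star (t α)

/-- A probability distribution on the bipartitions `{S, S̄}` of `[k]` (encoded by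
choosing a representative `S` for each bipartition occurring in the support). -/
def IsBipDist (θ : Finset (Fin k) → ℝ) : Prop :=
  (∀ S, 0 ≤ θ S) ∧ (∀ S, θ S ≠ 0 → S.Nonempty ∧ Sᶜ.Nonempty) ∧
    ∑ S : Finset (Fin k), θ S = 1

/-- The logarithmic lower quantum functional `E_θ` for `θ` a distribution on bipartitions. -/
def EwqBip (θ : Finset (Fin k) → ℝ) (t : Tensor ℂ I) : ℝ :=
  sSup {h | ∃ A : ∀ i, Matrix (I i) (I i) ℂ, IsBasisTuple A ∧
    h = ∑ S : Finset (Fin k), θ S * vnEntropy (margMatSet (restrictBy A t) S)}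

/-- The lower quantum functional `F_θ`. -/
def FwqBip (θ : Finset (Fin k) → ℝ) (t : Tensor ℂ I) : ℝ :=
  if t = 0 then 0 else (2 : ℝ) ^ EwqBip θ t

/-- Degeneration: `t` lies in the closure of the `GL × ⋯ × GL`-orbit of `s`. -/
def Degen (s t : Tensor ℂ I) : Prop :=
  t ∈ closure {u : Tensor ℂ I | ∃ A : ∀ i, Matrix (I i) (I i) ℂ,
    IsBasisTuple A ∧ restrictBy A s = u}

end Quantum

/-- Trace norm of a complex matrix: `Tr √(AᴴA)`. -/
def traceNorm {d : Type*} [Fintype d] [DecidableEq d] (A : Matrix d d ℂ) : ℝ :=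
  (((Matrix.posSemidef_conjTranspose_mul_self A).1.eigenvectorUnitary.1 *
      Matrix.diagonal (((↑) : ℝ → ℂ) ∘ (Real.sqrt ∘ (Matrix.posSemidef_conjTranspose_mul_self A).1.eigenvalues)) *
      (star (Matrix.posSemidef_conjTranspose_mul_self A).1.eigenvectorUnitary : Matrix d d ℂ)).trace).re

/-- `conjIter ρ X j = X_j ⋯ X_2 X_1 ρ X_1 X_2 ⋯ X_j`. -/
def conjIter {d : Type*} [Fintype d] (ρ : Matrix d d ℂ) {n : ℕ}
    (X : Fin n → Matrix d d ℂ) : ℕ → Matrix d d ℂ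
  | 0 => ρ
  | (j + 1) => if h : j < n then X ⟨j, h⟩ * conjIter ρ X j * X ⟨j, h⟩ else conjIter ρ X j

/-- A tricolored sum-free set in `G × G × G`. -/
def IsTriColoredSumFree {G : Type*} [AddCommGroup G] (Γ : Set (G × G × G)) : Prop :=
  (∀ a ∈ Γ, ∀ b ∈ Γ, a ≠ b → a.1 ≠ b.1 ∧ a.2.1 ≠ b.2.1 ∧ a.2.2 ≠ b.2.2) ∧
  ∀ x y z : G, (∃ a ∈ Γ, a.1 = x) → (∃ a ∈ Γ, a.2.1 = y) → (∃ a ∈ Γ, a.2.2 = z) →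
    (x + y + z = 0 ↔ (x, y, z) ∈ Γ)

/-- The maximal size `s₃(G)` of a tricolored sum-free set in `G × G × G`. -/
def s3 (G : Type*) [AddCommGroup G] : ℕ :=
  sSup {r : ℕ | ∃ Γ : Set (G × G × G), IsTriColoredSumFree Γ ∧ Γ.ncard = r}

/-- Binary entropy function (base 2), with the convention `0 · log 0 = 0`. -/
def binH (p : ℝ) : ℝ := -(p * Real.logb 2 p) - (1 - p) * Real.logb 2 (1 - p)

open Filter Topology

/-! ### Auxiliary lemmas for STATEMENT 16 -/

section Aux16

variable {F : Type*} [Field F] {I J : Fin k → Type*}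
  [∀ i, Fintype (I i)] [∀ i, DecidableEq (I i)]
  [∀ i, Fintype (J i)] [∀ i, DecidableEq (J i)]

/-- The slice of `u` obtained by keeping only the coefficients with `j`-th index `x`. -/
def sliceAt (u : Tensor F I) (j : Fin k) (x : I j) : Tensor F I :=
  fun α => if α j = x then u α else 0

lemma isSlice_sliceAt (u : Tensor F I) (j : Fin k) (x : I j) : IsSlice (sliceAt u j x) := by
  refine ⟨j, fun a => if a = x then 1 else 0,
    fun γ => u ((Equiv.piSplitAt j I).symm (x, γ)), fun α => ?_⟩
  by_cases h : α j = x
  · have h2 : (Equiv.piSplitAt j I).symm (x, fun i => α i.1) = α := by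
      subst h
      exact (Equiv.piSplitAt j I).symm_apply_apply α
    simp [sliceAt, h, h2]
  · simp [sliceAt, h]

lemma exists_decomp_card (u : Tensor F I) (j : Fin k) (S : Finset (I j))
    (hS : ∀ α, u α ≠ 0 → α j ∈ S) :
    ∃ c : Fin S.card → Tensor F I, (∀ a, IsSlice (c a)) ∧ u = ∑ a, c a := by
  refine ⟨fun a => sliceAt u j (S.equivFin.symm a), fun a => isSlice_sliceAt _ _ _, ?_⟩
  have h1 : ∑ a : Fin S.card, sliceAt u j ((S.equivFin.symm a : S) : I j)
      = ∑ x ∈ S, sliceAt u j x := by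
    rw [Equiv.sum_comp S.equivFin.symm (fun x : S => sliceAt u j (x : I j))]
    exact Finset.sum_coe_sort S (fun x => sliceAt u j x)
  rw [h1]
  funext α
  rw [Finset.sum_apply]
  simp only [sliceAt]
  rw [Finset.sum_ite_eq S (α j) (fun _ => u α)]
  by_cases h : α j ∈ S
  · simp [h]
  · simp only [h, if_false]
    rcases eq_or_ne (u α) 0 with h1 | h1
    · exact h1
    · exact absurd (hS α h1) h

lemma sliceRank_le_of_subset_fiber (u : Tensor F I) (j : Fin k) (S : Finset (I j))
    (hS : ∀ α, u α ≠ 0 → α j ∈ S) : sliceRank u ≤ S.card := by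
  obtain ⟨c, hc, hcu⟩ := exists_decomp_card u j S hS
  exact Nat.sInf_le ⟨c, hc, hcu⟩

lemma sliceRank_zero : sliceRank (0 : Tensor F I) = 0 :=
  Nat.eq_zero_of_le_zero (Nat.sInf_le ⟨Fin.elim0, fun a => a.elim0, by simp⟩)

lemma sliceRank_decomp (hk : 0 < k) (u : Tensor F I) :
    ∃ c : Fin (sliceRank u) → Tensor F I, (∀ a, IsSlice (c a)) ∧ u = ∑ a, c a := by
  have hne : {r : ℕ | ∃ c : Fin r → Tensor F I, (∀ a, IsSlice (c a)) ∧ u = ∑ a, c a}.Nonempty := by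
    obtain ⟨c, hc, hcu⟩ := exists_decomp_card u ⟨0, hk⟩ Finset.univ (fun α _ => Finset.mem_univ _)
    exact ⟨_, c, hc, hcu⟩
  exact Nat.sInf_mem hne

lemma sliceRank_add_le (hk : 0 < k) (u v : Tensor F I) :
    sliceRank (u + v) ≤ sliceRank u + sliceRank v := by
  obtain ⟨c, hc, hcu⟩ := sliceRank_decomp hk u
  obtain ⟨d, hd, hdv⟩ := sliceRank_decomp hk v
  apply Nat.sInf_le
  refine ⟨Fin.addCases c d, fun a => ?_, ?_⟩
  · refine Fin.addCases (motive := fun a => IsSlice (Fin.addCases c d a)) ?_ ?_ a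
    · intro i; simpa using hc i
    · intro i; simpa using hd i
  · rw [Fin.sum_univ_add]
    simp only [Fin.addCases_left, Fin.addCases_right]
    rw [← hcu, ← hdv]

lemma sliceRank_sum_le (hk : 0 < k) {γ : Type*} (s : Finset γ) (f : γ → Tensor F I) :
    sliceRank (∑ a ∈ s, f a) ≤ ∑ a ∈ s, sliceRank (f a) := by
  classical
  induction s using Finset.cons_induction with
  | empty => simp [sliceRank_zero]
  | cons a s ha ih =>
      rw [Finset.sum_cons, Finset.sum_cons]
      exact le_trans (sliceRank_add_le hk _ _) (Nat.add_le_add_left ih _)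

/-- Splitting a product over `Fin k` at the index `j`. -/
lemma prod_split {M : Type*} [CommMonoid M] (j : Fin k) (f : Fin k → M) :
    ∏ i, f i = f j * ∏ i : {i : Fin k // i ≠ j}, f i.1 := by
  rw [← Finset.mul_prod_erase Finset.univ f (Finset.mem_univ j)]
  congr 1
  exact Finset.prod_subtype (p := fun i => i ≠ j) (Finset.univ.erase j) (by simp)
    (fun i => f i)

lemma isSlice_restrictBy (A : ∀ i, Matrix (I i) (J i) F) {u : Tensor F I} (hu : IsSlice u) :
    IsSlice (restrictBy A u) := by
  obtain ⟨j, v, w, huvw⟩ := hu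
  refine ⟨j, fun b => ∑ a, A j a b * v a,
    fun γ => ∑ δ : ∀ i : {i : Fin k // i ≠ j}, I i.1,
      (∏ i : {i : Fin k // i ≠ j}, A i.1 (δ i) (γ i)) * w δ, fun β => ?_⟩
  show ∑ α : ∀ i, I i, (∏ i, A i (α i) (β i)) * u α = _
  rw [← Equiv.sum_comp (Equiv.piSplitAt j I).symm
    (fun α => (∏ i, A i (α i) (β i)) * u α), Fintype.sum_prod_type, Finset.sum_mul_sum]
  refine Finset.sum_congr rfl fun a _ => Finset.sum_congr rfl fun δ _ => ?_
  have hj : (Equiv.piSplitAt j I).symm (a, δ) j = a := by simp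
  have hne : ∀ (i : Fin k) (h : i ≠ j), (Equiv.piSplitAt j I).symm (a, δ) i = δ ⟨i, h⟩ := by
    intro i h; simp [h]
  have hu2 : u ((Equiv.piSplitAt j I).symm (a, δ)) = v a * w δ := by
    rw [huvw]
    congr 1
    · rw [hj]
    · congr 1
      funext i
      rw [hne i.1 i.2]
  rw [hu2, prod_split j (fun i => A i ((Equiv.piSplitAt j I).symm (a, δ) i) (β i)), hj]
  have hprod : ∏ i : {i : Fin k // i ≠ j}, A i.1 ((Equiv.piSplitAt j I).symm (a, δ) i.1) (β i.1)
      = ∏ i : {i : Fin k // i ≠ j}, A i.1 (δ i) (β i.1) := by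
    refine Finset.prod_congr rfl fun i _ => ?_
    rw [hne i.1 i.2]
  rw [hprod]
  ring

lemma restrictBy_sum (A : ∀ i, Matrix (I i) (J i) F) {γ : Type*} (s : Finset γ)
    (f : γ → Tensor F I) :
    restrictBy A (∑ a ∈ s, f a) = ∑ a ∈ s, restrictBy A (f a) := by
  funext β
  rw [Finset.sum_apply]
  show ∑ α : ∀ i, I i, (∏ i, A i (α i) (β i)) * (∑ a ∈ s, f a) α = _
  simp only [Finset.sum_apply, Finset.mul_sum]
  exact Finset.sum_comm

lemma sliceRank_restrictBy_le (hk : 0 < k) (A : ∀ i, Matrix (I i) (J i) F) (u : Tensor F I) :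
    sliceRank (restrictBy A u) ≤ sliceRank u := by
  obtain ⟨c, hc, hcu⟩ := sliceRank_decomp hk u
  apply Nat.sInf_le
  refine ⟨fun a => restrictBy A (c a), fun a => isSlice_restrictBy A (hc a), ?_⟩
  conv_lhs => rw [hcu]
  rw [restrictBy_sum]

lemma restrictBy_one (t : Tensor F I) :
    restrictBy (fun i => (1 : Matrix (I i) (I i) F)) t = t := by
  funext β
  show ∑ α : ∀ i, I i, (∏ i, (1 : Matrix (I i) (I i) F) (α i) (β i)) * t α = t β
  rw [Finset.sum_eq_single β]
  · simp [Matrix.one_apply]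
  · intro α _ hαβ
    obtain ⟨i, hi⟩ := Function.ne_iff.mp hαβ
    have hz : (1 : Matrix (I i) (I i) F) (α i) (β i) = 0 := Matrix.one_apply_ne hi
    rw [Finset.prod_eq_zero (Finset.mem_univ i) hz, zero_mul]
  · intro h; exact absurd (Finset.mem_univ β) h

lemma restrictBy_restrictBy {K : Fin k → Type*} [∀ i, Fintype (K i)] [∀ i, DecidableEq (K i)]
    (A : ∀ i, Matrix (J i) (K i) F) (B : ∀ i, Matrix (I i) (J i) F) (t : Tensor F I) :
    restrictBy A (restrictBy B t) = restrictBy (fun i => B i * A i) t := by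
  funext γ
  show ∑ β : ∀ i, J i, (∏ i, A i (β i) (γ i)) * ∑ α : ∀ i, I i, (∏ i, B i (α i) (β i)) * t α
      = ∑ α : ∀ i, I i, (∏ i, (B i * A i) (α i) (γ i)) * t α
  simp only [Finset.mul_sum]
  rw [Finset.sum_comm]
  refine Finset.sum_congr rfl fun α _ => ?_
  have h1 : ∀ i, (B i * A i) (α i) (γ i) = ∑ b : J i, B i (α i) b * A i b (γ i) := by
    intro i; rw [Matrix.mul_apply]
  simp only [h1]
  rw [Finset.prod_univ_sum, Finset.sum_mul]
  rw [← Fintype.piFinset_univ]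
  refine Finset.sum_congr rfl fun β _ => ?_
  rw [Finset.prod_mul_distrib]
  ring

/-- Tensor powers commute with restriction. -/
lemma tpow_restrictBy (A : ∀ i, Matrix (I i) (J i) F) (t : Tensor F I) (N : ℕ) :
    tpow (restrictBy A t) N =
      restrictBy (fun i => Matrix.of (fun (β : Fin N → I i) (γ : Fin N → J i) =>
        ∏ j, A i (β j) (γ j))) (tpow t N) := by
  funext γ
  show ∏ j : Fin N, (∑ α : ∀ i, I i, (∏ i, A i (α i) (γ i j)) * t α)
      = ∑ β : ∀ i, Fin N → I i, (∏ i, ∏ j, A i (β i j) (γ i j)) * ∏ j : Fin N, t (fun i => β i j)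
  calc ∏ j : Fin N, (∑ α : ∀ i, I i, (∏ i, A i (α i) (γ i j)) * t α)
      = ∑ g ∈ Fintype.piFinset (fun _ : Fin N => (Finset.univ : Finset (∀ i, I i))),
          ∏ j : Fin N, (∏ i, A i (g j i) (γ i j)) * t (g j) := Finset.prod_univ_sum _ _
    _ = ∑ g : Fin N → ∀ i, I i, ∏ j : Fin N, (∏ i, A i (g j i) (γ i j)) * t (g j) := by
          rw [Fintype.piFinset_univ]
    _ = ∑ g : Fin N → ∀ i, I i, (∏ i, ∏ j, A i (g j i) (γ i j)) * ∏ j : Fin N, t (g j) := by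
          refine Finset.sum_congr rfl fun g _ => ?_
          rw [Finset.prod_mul_distrib, Finset.prod_comm]
    _ = ∑ β : ∀ i, Fin N → I i, (∏ i, ∏ j, A i (β i j) (γ i j))
          * ∏ j : Fin N, t (fun i => β i j) :=
          (Equiv.sum_comp (Equiv.piComm (fun (i : Fin k) (_ : Fin N) => I i))
            (fun g : Fin N → ∀ i, I i =>
              (∏ i, ∏ j, A i (g j i) (γ i j)) * ∏ j : Fin N, t (g j))).symm

end Aux16

section Aux16b

variable {F : Type*} [Field F] {I : Fin k → Type*} [∀ i, Fintype (I i)] [∀ i, DecidableEq (I i)]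

/-- The number of occurrences of the tuple `φ` among the `N` "coordinates" of the index `α`
of the `N`-th tensor power. -/
def cnt {N : ℕ} (α : ∀ i, Fin N → I i) (φ : ∀ i, I i) : ℕ :=
  (Finset.univ.filter (fun j : Fin N => (fun i => α i j) = φ)).card

/-- The part of `tpow s N` supported on indices of type `τ`. -/
def typeBlock (s : Tensor F I) (N : ℕ) (τ : (∀ i, I i) → ℕ) : Tensor F (fun i => Fin N → I i) :=
  fun α => if (fun φ => cnt α φ) = τ then tpow s N α else 0

lemma sum_cnt {N : ℕ} (α : ∀ i, Fin N → I i) : ∑ φ : ∀ i, I i, cnt α φ = N := by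
  have := Finset.card_eq_sum_card_fiberwise
    (f := fun j : Fin N => (fun i => α i j)) (s := Finset.univ) (t := Finset.univ)
    (fun x _ => Finset.mem_univ _)
  simpa [cnt] using this.symm

lemma cnt_le {N : ℕ} (α : ∀ i, Fin N → I i) (φ : ∀ i, I i) : cnt α φ ≤ N := by
  simpa [cnt] using Finset.card_filter_le Finset.univ (fun j : Fin N => (fun i => α i j) = φ)

lemma tpow_eq_sum_typeBlock (s : Tensor F I) (N : ℕ) :
    tpow s N = ∑ τ : (∀ i, I i) → Fin (N + 1), typeBlock s N (fun φ => (τ φ : ℕ)) := by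
  funext α
  rw [Finset.sum_apply]
  rw [Finset.sum_eq_single
    (f := fun τ : (∀ i, I i) → Fin (N + 1) => typeBlock s N (fun φ => (τ φ : ℕ)) α)
    (fun φ => (⟨cnt α φ, Nat.lt_succ_of_le (cnt_le α φ)⟩ : Fin (N + 1)))]
  · unfold typeBlock
    rw [if_pos]
    rfl
  · intro τ _ hτ
    unfold typeBlock
    rw [if_neg]
    intro hc
    apply hτ
    funext φ
    exact Fin.ext (congrFun hc φ).symm
  · intro h; exact absurd (Finset.mem_univ _) h

/-- The fiber counts of the `i`-th marginal sequence. -/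
lemma cnt_marginal {N : ℕ} (α : ∀ i, Fin N → I i) (i : Fin k) (x : I i) :
    (Finset.univ.filter (fun j : Fin N => α i j = x)).card
      = ∑ φ ∈ Finset.univ.filter (fun φ : ∀ i, I i => φ i = x), cnt α φ := by
  rw [Finset.card_eq_sum_card_fiberwise (f := fun j : Fin N => (fun i' => α i' j))
    (t := Finset.univ.filter (fun φ : ∀ i, I i => φ i = x))]
  · refine Finset.sum_congr rfl fun φ hφ => ?_
    rw [Finset.mem_filter] at hφ
    unfold cnt
    congr 1
    ext j
    simp only [Finset.mem_filter, Finset.mem_univ, true_and]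
    constructor
    · rintro ⟨-, h2⟩; exact h2
    · intro h; exact ⟨by rw [← hφ.2, ← h], h⟩
  · intro j hj
    simpa using hj

lemma two_rpow_sum {γ : Type*} (s : Finset γ) (f : γ → ℝ) :
    (2 : ℝ) ^ (∑ x ∈ s, f x) = ∏ x ∈ s, (2 : ℝ) ^ f x := by
  simp only [Real.rpow_def_of_pos (by norm_num : (0:ℝ) < 2), Finset.mul_sum, Real.exp_sum]

/-- Counting sequences with a given type: at most `2 ^ (N · H)`. -/
lemma card_typeClass_le {X : Type*} [Fintype X] [DecidableEq X] {N : ℕ} (hN : 0 < N)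
    (c : X → ℕ) (hc : ∑ x, c x = N) :
    ((Finset.univ.filter (fun β : Fin N → X =>
        ∀ x, (Finset.univ.filter (fun j => β j = x)).card = c x)).card : ℝ)
      ≤ 2 ^ ((N : ℝ) * H2 (fun x => (c x : ℝ) / N)) := by
  have hN0 : (N : ℝ) ≠ 0 := Nat.cast_ne_zero.mpr hN.ne'
  set Q : X → ℝ := fun x => (c x : ℝ) / N with hQ
  have hQ0 : ∀ x, 0 ≤ Q x := fun x => div_nonneg (Nat.cast_nonneg _) (Nat.cast_nonneg _)
  have hQ1 : ∑ x, Q x = 1 := by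
    rw [hQ, ← Finset.sum_div]
    rw [div_eq_one_iff_eq hN0]
    exact_mod_cast hc
  set S := Finset.univ.filter (fun β : Fin N → X =>
    ∀ x, (Finset.univ.filter (fun j => β j = x)).card = c x) with hS
  -- each member of the class has product probability 2 ^ (-(N·H))
  have hkey : ∀ β ∈ S, ∏ j : Fin N, Q (β j) = 2 ^ (-((N : ℝ) * H2 Q)) := by
    intro β hβ
    rw [hS, Finset.mem_filter] at hβ
    have h1 : ∏ j : Fin N, Q (β j) = ∏ x : X, Q x ^ (c x) := by
      rw [Finset.prod_comp Q β]
      rw [Finset.prod_subset (Finset.subset_univ (Finset.univ.image β))]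
      · refine Finset.prod_congr rfl fun x _ => by rw [hβ.2 x]
      · intro x _ hx
        have : (Finset.univ.filter (fun j => β j = x)).card = 0 := by
          rw [Finset.card_eq_zero, Finset.filter_eq_empty_iff]
          intro j _
          intro hj
          exact hx (Finset.mem_image.mpr ⟨j, Finset.mem_univ j, hj⟩)
        rw [this, pow_zero]
    have h2 : ∀ x : X, Q x ^ (c x) = (2 : ℝ) ^ ((c x : ℝ) * Real.logb 2 (Q x)) := by
      intro x
      rcases Nat.eq_zero_or_pos (c x) with h0 | h0
      · simp [h0]
      · have hQx : 0 < Q x := by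
          rw [hQ]
          exact div_pos (by exact_mod_cast h0) (by exact_mod_cast hN)
        have hb : Q x ^ c x = ((2:ℝ) ^ Real.logb 2 (Q x)) ^ (c x) := by
          rw [Real.rpow_logb (by norm_num) (by norm_num) hQx]
        rw [hb, ← Real.rpow_natCast ((2:ℝ) ^ Real.logb 2 (Q x)) (c x),
          ← Real.rpow_mul (by norm_num), mul_comm]
    have h3 : ∑ x : X, (c x : ℝ) * Real.logb 2 (Q x) = -((N : ℝ) * H2 Q) := by
      have hterm : ∀ x : X, (c x : ℝ) * Real.logb 2 (Q x)
          = -((N : ℝ) * -(Q x * Real.logb 2 (Q x))) := by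
        intro x
        have hcx : (c x : ℝ) = Q x * N := by rw [hQ]; field_simp
        rw [hcx]; ring
      rw [Finset.sum_congr rfl fun x _ => hterm x, H2]
      rw [Finset.sum_neg_distrib, ← Finset.mul_sum]
    rw [h1]
    simp only [h2]
    rw [← two_rpow_sum, h3]
  have hp : (0 : ℝ) < 2 ^ (-((N : ℝ) * H2 Q)) := Real.rpow_pos_of_pos (by norm_num) _
  have hsum : (S.card : ℝ) * 2 ^ (-((N : ℝ) * H2 Q)) ≤ 1 := by
    have h4 : ∑ β ∈ S, ∏ j : Fin N, Q (β j) = (S.card : ℝ) * 2 ^ (-((N : ℝ) * H2 Q)) := by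
      rw [Finset.sum_congr rfl hkey, Finset.sum_const, nsmul_eq_mul]
    have h5 : ∑ β ∈ S, ∏ j : Fin N, Q (β j) ≤ ∑ β : Fin N → X, ∏ j : Fin N, Q (β j) := by
      refine Finset.sum_le_sum_of_subset_of_nonneg (Finset.subset_univ S) ?_
      intro β _ _
      exact Finset.prod_nonneg fun j _ => hQ0 _
    have h6 : ∑ β : Fin N → X, ∏ j : Fin N, Q (β j) = 1 := by
      rw [← Fintype.piFinset_univ, ← Finset.prod_univ_sum]
      simp [hQ1]
    rw [← h4, ← h6] at *
    exact h5
  have := (le_div_iff₀ hp).mpr hsum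
  rwa [one_div, ← Real.rpow_neg (by norm_num : (0:ℝ) ≤ 2), neg_neg] at this

lemma H2_le_logb_card {X : Type*} [Fintype X] (P : X → ℝ) (hP : IsProbDist P) :
    H2 P ≤ Real.logb 2 (Fintype.card X) := by
  have hcard : 0 < Fintype.card X := by
    rcases Nat.eq_zero_or_pos (Fintype.card X) with h0 | h0
    · exfalso
      have : IsEmpty X := Fintype.card_eq_zero_iff.mp h0
      have := hP.2
      rw [Finset.univ_eq_empty, Finset.sum_empty] at this
      norm_num at this
    · exact h0
  have hn : (0 : ℝ) < (Fintype.card X : ℝ) := by exact_mod_cast hcard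
  -- Jensen for negMulLog
  have hjensen := Real.concaveOn_negMulLog.le_map_sum (t := Finset.univ)
    (w := fun _ : X => ((Fintype.card X : ℝ))⁻¹) (p := P)
    (fun i _ => by positivity)
    (by rw [Finset.sum_const]; simp; field_simp)
    (fun i _ => Set.mem_Ici.mpr (hP.1 i))
  have hsum : ∑ i : X, ((Fintype.card X : ℝ))⁻¹ • P i = (Fintype.card X : ℝ)⁻¹ := by
    rw [← Finset.smul_sum, hP.2, smul_eq_mul, mul_one]
  rw [hsum] at hjensen
  have hval : Real.negMulLog ((Fintype.card X : ℝ)⁻¹)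
      = (Fintype.card X : ℝ)⁻¹ * Real.log (Fintype.card X) := by
    rw [Real.negMulLog, Real.log_inv]; ring
  rw [hval] at hjensen
  have h7 : ∑ i : X, Real.negMulLog (P i) ≤ Real.log (Fintype.card X) := by
    have := hjensen
    simp only [smul_eq_mul] at this
    rw [← Finset.mul_sum] at this
    calc ∑ i : X, Real.negMulLog (P i)
        = (Fintype.card X : ℝ) * ((Fintype.card X : ℝ)⁻¹ * ∑ i : X, Real.negMulLog (P i)) := by
          field_simp
      _ ≤ (Fintype.card X : ℝ) * ((Fintype.card X : ℝ)⁻¹ * Real.log (Fintype.card X)) := by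
          apply mul_le_mul_of_nonneg_left _ hn.le
          exact this
      _ = Real.log (Fintype.card X) := by field_simp
  have hlog2 : (0:ℝ) < Real.log 2 := Real.log_pos (by norm_num)
  have h8 : H2 P = (∑ i : X, Real.negMulLog (P i)) / Real.log 2 := by
    rw [H2, Finset.sum_div]
    refine Finset.sum_congr rfl fun x _ => ?_
    rw [Real.negMulLog, Real.logb]
    ring
  rw [h8, Real.logb]
  exact (div_le_div_iff_of_pos_right hlog2).mpr h7

lemma marg_isProbDist {P : (∀ i, I i) → ℝ} (hP : IsProbDist P) (i : Fin k) :
    IsProbDist (marg P i) := by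
  constructor
  · intro a
    refine Finset.sum_nonneg fun α _ => ?_
    split
    · exact hP.1 α
    · exact le_refl 0
  · show ∑ a : I i, ∑ α : ∀ i', I i', (if α i = a then P α else 0) = 1
    rw [Finset.sum_comm]
    have hx : ∀ α : ∀ i', I i', ∑ a : I i, (if α i = a then P α else 0) = P α := by
      intro α
      rw [Finset.sum_ite_eq Finset.univ (α i) (fun _ => P α)]
      simp
    rw [Finset.sum_congr rfl (fun α _ => hx α), hP.2]

lemma bddAbove_hw (θ : Fin k → ℝ) (hθ : IsProbDist θ) (Φ : Set (∀ i, I i)) :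
    BddAbove {h | ∃ P : (∀ i, I i) → ℝ, IsProbDist P ∧ (∀ α, P α ≠ 0 → α ∈ Φ) ∧ h = Hw θ P} := by
  refine ⟨∑ i, θ i * Real.logb 2 (Fintype.card (I i)), ?_⟩
  rintro h ⟨P, hP, -, rfl⟩
  refine Finset.sum_le_sum fun i _ => ?_
  exact mul_le_mul_of_nonneg_left (H2_le_logb_card _ (marg_isProbDist hP i)) (hθ.1 i)

lemma typeBlock_sliceRank_le (hk : 0 < k) {θ : Fin k → ℝ} (hθ : IsProbDist θ)
    (s : Tensor F I) {N : ℕ} (hN : 0 < N) (τ : (∀ i, I i) → ℕ) :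
    (sliceRank (typeBlock s N τ) : ℝ) ≤ 2 ^ ((N : ℝ) * HwSet θ (supp s)) := by
  by_cases h0 : typeBlock s N τ = 0
  · rw [h0, sliceRank_zero, Nat.cast_zero]
    positivity
  · obtain ⟨α₀, hα₀⟩ : ∃ α₀, typeBlock s N τ α₀ ≠ 0 := by
      by_contra h
      push_neg at h
      exact h0 (funext fun α => h α)
    have hcnt : (fun φ => cnt α₀ φ) = τ := by
      by_contra h
      exact hα₀ (if_neg h)
    have htp : tpow s N α₀ ≠ 0 := by
      intro h
      apply hα₀
      unfold typeBlock
      rw [h]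
      simp
    have hτN : ∑ φ : ∀ i, I i, τ φ = N := by rw [← hcnt]; exact sum_cnt α₀
    have hτsupp : ∀ φ, τ φ ≠ 0 → φ ∈ supp s := by
      intro φ hφ
      rw [← hcnt] at hφ
      obtain ⟨j, hj⟩ : ∃ j : Fin N, (fun i => α₀ i j) = φ := by
        by_contra h
        push_neg at h
        apply hφ
        unfold cnt
        rw [Finset.card_eq_zero, Finset.filter_eq_empty_iff]
        intro j _
        exact h j
      have hsj : s (fun i => α₀ i j) ≠ 0 := by
        intro h
        apply htp
        unfold tpow
        exact Finset.prod_eq_zero (Finset.mem_univ j) h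
      rw [hj] at hsj
      exact hsj
    have hN0 : (N : ℝ) ≠ 0 := Nat.cast_ne_zero.mpr hN.ne'
    have hPdist : IsProbDist (fun φ : ∀ i, I i => (τ φ : ℝ) / N) := by
      constructor
      · intro φ; positivity
      · rw [← Finset.sum_div, div_eq_one_iff_eq hN0]
        exact_mod_cast hτN
    have hPsupp : ∀ φ : ∀ i, I i, (τ φ : ℝ) / N ≠ 0 → φ ∈ supp s := by
      intro φ h
      refine hτsupp φ fun h0 => h ?_
      rw [h0]
      simp
    have hmarg : ∀ (i : Fin k) (x : I i), marg (fun φ : ∀ i, I i => (τ φ : ℝ) / N) i x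
        = ((∑ φ ∈ Finset.univ.filter (fun φ : ∀ i', I i' => φ i = x), τ φ : ℕ) : ℝ) / N := by
      intro i x
      unfold marg
      rw [← Finset.sum_filter (fun φ : ∀ i', I i' => φ i = x)
        (fun φ => (τ φ : ℝ) / N)]
      rw [← Finset.sum_div, Nat.cast_sum]
    obtain ⟨i0, -, hi0⟩ := Finset.exists_min_image Finset.univ
      (fun i => H2 (marg (fun φ : ∀ i, I i => (τ φ : ℝ) / N) i)) ⟨⟨0, hk⟩, Finset.mem_univ _⟩
    have hcN : ∑ x : I i0, ∑ φ ∈ Finset.univ.filter (fun φ : ∀ i', I i' => φ i0 = x), τ φ = N := by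
      rw [← hτN]
      exact Finset.sum_fiberwise Finset.univ (fun φ : ∀ i, I i => φ i0) τ
    have h1 : sliceRank (typeBlock s N τ) ≤ (Finset.univ.filter (fun β : Fin N → I i0 =>
        ∀ x, (Finset.univ.filter (fun j => β j = x)).card
          = ∑ φ ∈ Finset.univ.filter (fun φ : ∀ i', I i' => φ i0 = x), τ φ)).card := by
      apply sliceRank_le_of_subset_fiber (typeBlock s N τ) i0
      intro α hα
      have hcntα : (fun φ => cnt α φ) = τ := by
        by_contra h
        exact hα (if_neg h)
      rw [Finset.mem_filter]
      refine ⟨Finset.mem_univ _, fun x => ?_⟩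
      rw [cnt_marginal α i0 x]
      exact Finset.sum_congr rfl fun φ _ => congrFun hcntα φ
    have h2 := card_typeClass_le hN
      (fun x : I i0 => ∑ φ ∈ Finset.univ.filter (fun φ : ∀ i', I i' => φ i0 = x), τ φ) hcN
    have hEq : (fun x : I i0 =>
        ((∑ φ ∈ Finset.univ.filter (fun φ : ∀ i', I i' => φ i0 = x), τ φ : ℕ) : ℝ) / N)
        = marg (fun φ : ∀ i, I i => (τ φ : ℝ) / N) i0 := by
      funext x
      rw [hmarg i0 x]
    rw [hEq] at h2
    have h3 : H2 (marg (fun φ : ∀ i, I i => (τ φ : ℝ) / N) i0)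
        ≤ Hw θ (fun φ : ∀ i, I i => (τ φ : ℝ) / N) := by
      calc H2 (marg (fun φ : ∀ i, I i => (τ φ : ℝ) / N) i0)
          = ∑ i, θ i * H2 (marg (fun φ : ∀ i, I i => (τ φ : ℝ) / N) i0) := by
            rw [← Finset.sum_mul, hθ.2, one_mul]
        _ ≤ ∑ i, θ i * H2 (marg (fun φ : ∀ i, I i => (τ φ : ℝ) / N) i) :=
            Finset.sum_le_sum fun i _ =>
              mul_le_mul_of_nonneg_left (hi0 i (Finset.mem_univ i)) (hθ.1 i)
        _ = Hw θ (fun φ : ∀ i, I i => (τ φ : ℝ) / N) := rfl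
    have h4 : Hw θ (fun φ : ∀ i, I i => (τ φ : ℝ) / N) ≤ HwSet θ (supp s) :=
      le_csSup (bddAbove_hw θ hθ _) ⟨_, hPdist, hPsupp, rfl⟩
    calc (sliceRank (typeBlock s N τ) : ℝ)
        ≤ _ := by exact_mod_cast h1
      _ ≤ 2 ^ ((N : ℝ) * H2 (marg (fun φ : ∀ i, I i => (τ φ : ℝ) / N) i0)) := h2
      _ ≤ 2 ^ ((N : ℝ) * HwSet θ (supp s)) := by
          apply Real.rpow_le_rpow_of_exponent_le one_le_two
          exact mul_le_mul_of_nonneg_left (h3.trans h4) (Nat.cast_nonneg N)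

lemma sliceRank_tpow_le (hk : 0 < k) {θ : Fin k → ℝ} (hθ : IsProbDist θ)
    (s : Tensor F I) {N : ℕ} (hN : 0 < N) :
    (sliceRank (tpow s N) : ℝ)
      ≤ ((N : ℝ) + 1) ^ (Fintype.card (∀ i, I i)) * 2 ^ ((N : ℝ) * HwSet θ (supp s)) := by
  have h1 : sliceRank (tpow s N) ≤
      ∑ τ : (∀ i, I i) → Fin (N + 1), sliceRank (typeBlock s N (fun φ => (τ φ : ℕ))) := by
    conv_lhs => rw [tpow_eq_sum_typeBlock s N]
    exact sliceRank_sum_le hk _ _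
  have h2 : ((sliceRank (tpow s N)) : ℝ) ≤
      ∑ τ : (∀ i, I i) → Fin (N + 1),
        ((sliceRank (typeBlock s N (fun φ => (τ φ : ℕ)))) : ℝ) := by
    exact_mod_cast h1
  refine h2.trans ?_
  calc ∑ τ : (∀ i, I i) → Fin (N + 1), ((sliceRank (typeBlock s N (fun φ => (τ φ : ℕ)))) : ℝ)
      ≤ ∑ _τ : (∀ i, I i) → Fin (N + 1), (2 : ℝ) ^ ((N : ℝ) * HwSet θ (supp s)) :=
        Finset.sum_le_sum fun τ _ => typeBlock_sliceRank_le hk hθ s hN _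
    _ = (Fintype.card ((∀ i, I i) → Fin (N + 1)) : ℝ) * 2 ^ ((N : ℝ) * HwSet θ (supp s)) := by
        rw [Finset.sum_const, nsmul_eq_mul, Finset.card_univ]
    _ = ((N : ℝ) + 1) ^ (Fintype.card (∀ i, I i)) * 2 ^ ((N : ℝ) * HwSet θ (supp s)) := by
        congr 1
        rw [Fintype.card_fun, Fintype.card_fin]
        push_cast
        ring

lemma limsup_basis_le {θ : Fin k → ℝ} (hθ : IsProbDist θ) (hk : 0 < k)
    (t : Tensor F I) (B : ∀ i, Matrix (I i) (I i) F) (hB : IsBasisTuple B) :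
    Filter.limsup (fun N : ℕ => (sliceRank (tpow t N) : ℝ) ^ ((N : ℝ)⁻¹)) atTop
      ≤ 2 ^ HwSet θ (supp (restrictBy B t)) := by
  set M := Fintype.card (∀ i, I i) with hM
  have hC : restrictBy (fun i => (B i)⁻¹) (restrictBy B t) = t := by
    rw [restrictBy_restrictBy]
    have hone : (fun i => B i * (B i)⁻¹) = fun i => (1 : Matrix (I i) (I i) F) := by
      funext i
      exact Matrix.mul_nonsing_inv (B i) ((Matrix.isUnit_iff_isUnit_det (B i)).mp (hB i))
    rw [hone, restrictBy_one]
  have key : ∀ N : ℕ, 0 < N → (sliceRank (tpow t N) : ℝ)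
      ≤ ((N : ℝ) + 1) ^ M * 2 ^ ((N : ℝ) * HwSet θ (supp (restrictBy B t))) := by
    intro N hN
    have e1 : sliceRank (tpow t N) ≤ sliceRank (tpow (restrictBy B t) N) := by
      conv_lhs => rw [← hC]
      rw [tpow_restrictBy]
      exact sliceRank_restrictBy_le hk _ _
    calc (sliceRank (tpow t N) : ℝ) ≤ (sliceRank (tpow (restrictBy B t) N) : ℝ) := by
          exact_mod_cast e1
      _ ≤ ((N : ℝ) + 1) ^ M * 2 ^ ((N : ℝ) * HwSet θ (supp (restrictBy B t))) :=
          sliceRank_tpow_le hk hθ _ hN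
  have hfg : ∀ᶠ N : ℕ in atTop, (sliceRank (tpow t N) : ℝ) ^ ((N : ℝ)⁻¹)
      ≤ ((N : ℝ) + 1) ^ ((M : ℝ) / (N : ℝ)) * 2 ^ HwSet θ (supp (restrictBy B t)) := by
    filter_upwards [eventually_ge_atTop 1] with N hN1
    have hN : 0 < N := hN1
    have hNR : (0 : ℝ) < N := by exact_mod_cast hN
    have step1 : ((sliceRank (tpow t N) : ℝ)) ^ ((N : ℝ)⁻¹)
        ≤ (((N : ℝ) + 1) ^ M * 2 ^ ((N : ℝ) * HwSet θ (supp (restrictBy B t)))) ^ ((N : ℝ)⁻¹) :=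
      Real.rpow_le_rpow (Nat.cast_nonneg _) (key N hN) (by positivity)
    refine step1.trans_eq ?_
    rw [Real.mul_rpow (by positivity) (Real.rpow_nonneg (by norm_num) _)]
    congr 1
    · rw [← Real.rpow_natCast ((N : ℝ) + 1) M,
        ← Real.rpow_mul (by positivity : (0:ℝ) ≤ (N : ℝ) + 1), div_eq_mul_inv]
    · rw [← Real.rpow_mul (by norm_num : (0:ℝ) ≤ 2)]
      congr 1
      rw [mul_comm (N : ℝ) _, mul_assoc, mul_inv_cancel₀ hNR.ne', mul_one]
  have htend : Tendsto (fun N : ℕ =>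
      ((N : ℝ) + 1) ^ ((M : ℝ) / (N : ℝ)) * 2 ^ HwSet θ (supp (restrictBy B t))) atTop
      (𝓝 (1 * 2 ^ HwSet θ (supp (restrictBy B t)))) := by
    apply Tendsto.mul_const
    have h1 := tendsto_rpow_div_mul_add (M : ℝ) 1 (-1) (by norm_num)
    have h2 : Tendsto (fun N : ℕ => (N : ℝ) + 1) atTop atTop :=
      tendsto_atTop_add_const_right atTop 1 tendsto_natCast_atTop_atTop
    refine (h1.comp h2).congr fun N => ?_
    show ((N : ℝ) + 1) ^ ((M : ℝ) / (1 * ((N : ℝ) + 1) + -1)) = ((N : ℝ) + 1) ^ ((M : ℝ) / (N : ℝ))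
    norm_num
  calc Filter.limsup (fun N : ℕ => (sliceRank (tpow t N) : ℝ) ^ ((N : ℝ)⁻¹)) atTop
      ≤ Filter.limsup (fun N : ℕ =>
          ((N : ℝ) + 1) ^ ((M : ℝ) / (N : ℝ)) * 2 ^ HwSet θ (supp (restrictBy B t))) atTop :=
        limsup_le_limsup hfg
          (isCoboundedUnder_le_of_le atTop fun N => Real.rpow_nonneg (Nat.cast_nonneg _) _)
          htend.isBoundedUnder_le
    _ = 1 * 2 ^ HwSet θ (supp (restrictBy B t)) := htend.limsup_eq
    _ = 2 ^ HwSet θ (supp (restrictBy B t)) := one_mul _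

end Aux16b

/-- asymptotic slice rank is at most the upper support functional. -/
theorem statement16 {k : ℕ} {F : Type*} [Field F] {n : Fin k → ℕ}
    (t : Tensor F fun i => Fin (n i)) (θ : Fin k → ℝ) (hθ : IsProbDist θ) :
    Filter.limsup (fun N : ℕ => (sliceRank (tpow t N) : ℝ) ^ ((N : ℝ)⁻¹)) atTop
      ≤ zetaUpper θ t := by
  rcases eq_or_ne t 0 with rfl | ht
  · rw [zetaUpper, if_pos rfl]
    have hev : (fun N : ℕ =>
        (sliceRank (tpow (0 : Tensor F fun i => Fin (n i)) N) : ℝ) ^ ((N : ℝ)⁻¹))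
        =ᶠ[atTop] fun _ => (0 : ℝ) := by
      filter_upwards [eventually_ge_atTop 1] with N hN
      have h0 : tpow (0 : Tensor F fun i => Fin (n i)) N = 0 := by
        funext α
        show ∏ _j : Fin N, (0 : Tensor F fun i => Fin (n i)) _ = 0
        simp only [Pi.zero_apply]
        rw [Finset.prod_const, Finset.card_univ, Fintype.card_fin]
        exact zero_pow (by omega)
      rw [h0, sliceRank_zero, Nat.cast_zero,
        Real.zero_rpow (inv_ne_zero (Nat.cast_ne_zero.mpr (by omega)))]
    rw [Filter.limsup_congr hev, Filter.limsup_const]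
  · have hk : 0 < k := by
      rcases Nat.eq_zero_or_pos k with hk0 | hk0
      · exfalso
        have h2 := hθ.2
        subst hk0
        simpa using h2
      · exact hk0
    rw [zetaUpper, if_neg ht]
    rcases le_or_gt
      (Filter.limsup (fun N : ℕ => (sliceRank (tpow t N) : ℝ) ^ ((N : ℝ)⁻¹)) atTop) 0 with hL | hL
    · exact hL.trans (Real.rpow_pos_of_pos two_pos _).le
    · have hlog : Real.logb 2
          (Filter.limsup (fun N : ℕ => (sliceRank (tpow t N) : ℝ) ^ ((N : ℝ)⁻¹)) atTop)
          ≤ rhoUpper θ t := by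
        apply le_csInf
        · exact ⟨_, fun i => (1 : Matrix (Fin (n i)) (Fin (n i)) F), fun i => isUnit_one, rfl⟩
        · rintro b ⟨B, hB, rfl⟩
          rw [Real.logb_le_iff_le_rpow one_lt_two hL]
          exact limsup_basis_le hθ hk t B hB
      calc Filter.limsup (fun N : ℕ => (sliceRank (tpow t N) : ℝ) ^ ((N : ℝ)⁻¹)) atTop
          = 2 ^ Real.logb 2
              (Filter.limsup (fun N : ℕ => (sliceRank (tpow t N) : ℝ) ^ ((N : ℝ)⁻¹)) atTop) :=
            (Real.rpow_logb two_pos (by norm_num) hL).symm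
        _ ≤ 2 ^ rhoUpper θ t := Real.rpow_le_rpow_of_exponent_le one_le_two hlog

end CVZ

end
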